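/- Let D be a dataset with d-index d, where the d-index is the maximum integer q such that D contains at least q distinct transactions of length at least q forming an anti-chain under set inclusion. Then the VC-dimension of the range space (D, R) associated with D is at most d. -/

import Mathlib

open Finset

def suppSet {α : Type*} [DecidableEq α] (D : Finset (Finset α)) (A : Finset α) :
    Finset (Finset α) :=
  D.filter (fun τ => A ⊆ τ)

def Shattered {α : Type*} [DecidableEq α] (D K : Finset (Finset α)) : Prop :=
  ∀ B ⊆ K, ∃ A : Finset α, A.Nonempty ∧ suppSet D A ∩ K = B

/-- `D` contains at least `q` distinct transactions of length at least `q`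
forming an anti-chain under inclusion. -/
def dIndexGe {α : Type*} [DecidableEq α] (D : Finset (Finset α)) (q : ℕ) : Prop :=
  ∃ A ⊆ D, q ≤ A.card ∧ (∀ τ ∈ A, q ≤ τ.card) ∧
    IsAntichain (· ⊆ ·) (A : Set (Finset α))

/-- The d-index of a dataset. -/
noncomputable def dIndex {α : Type*} [DecidableEq α] (D : Finset (Finset α)) : ℕ :=
  sSup {q | dIndexGe D q}

/-- if `D` has d-index `d`, the VC-dimension of the associated range space
is at most `d`, i.e. every shattered set of transactions has cardinality at most `d`. -/
theorem vcDim_le_dIndex {α : Type*} [DecidableEq α] (D : Finset (Finset α)) (d : ℕ)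
    (hd : dIndex D = d) :
    ∀ K ⊆ D, Shattered D K → K.card ≤ d := by
  classical
  intro K hK hSh
  -- a choice function for witnesses
  let F : Finset (Finset α) → Finset α := fun B =>
    if h : B ⊆ K then (hSh B h).choose else ∅
  have hF : ∀ B (h : B ⊆ K), (F B).Nonempty ∧ suppSet D (F B) ∩ K = B := by
    intro B h
    simpa only [F, dif_pos h] using (hSh B h).choose_spec
  have hgeK : dIndexGe D K.card := by
    refine ⟨K, hK, le_refl _, ?_, ?_⟩
    · -- each τ ∈ K has card ≥ K.card
      intro τ hτ
      set g : Finset (Finset α) → Finset α := fun B => F (insert τ B) with hg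
      have hsub : ∀ B ∈ (K.erase τ).powerset, insert τ B ⊆ K := by
        intro B hB
        rw [mem_powerset] at hB
        exact insert_subset hτ (hB.trans (erase_subset _ _))
      have hmem : ∀ B ∈ (K.erase τ).powerset,
          g B ∈ τ.powerset.filter (fun A => A.Nonempty) := by
        intro B hB
        obtain ⟨hne, heq⟩ := hF _ (hsub B hB)
        have hτmem : τ ∈ suppSet D (g B) ∩ K := by
          rw [heq]; exact mem_insert_self _ _
        rw [mem_inter, suppSet, mem_filter] at hτmem
        simp only [mem_filter, mem_powerset]
        exact ⟨hτmem.1.2, hne⟩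
      have hinj : ∀ B₁ ∈ (K.erase τ).powerset, ∀ B₂ ∈ (K.erase τ).powerset,
          g B₁ = g B₂ → B₁ = B₂ := by
        intro B₁ h₁ B₂ h₂ hgeq
        have e₁ := (hF _ (hsub B₁ h₁)).2
        have e₂ := (hF _ (hsub B₂ h₂)).2
        have hgeq' : F (insert τ B₁) = F (insert τ B₂) := hgeq
        have : insert τ B₁ = insert τ B₂ := by
          rw [← e₁, ← e₂, hgeq']
        have hn₁ : τ ∉ B₁ := fun h => (mem_erase.mp ((mem_powerset.mp h₁) h)).1 rfl
        have hn₂ : τ ∉ B₂ := fun h => (mem_erase.mp ((mem_powerset.mp h₂) h)).1 rfl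
        rw [← erase_insert hn₁, ← erase_insert hn₂, this]
      have hcard := Finset.card_le_card_of_injOn g hmem hinj
      have hfil : (τ.powerset.filter (fun A => A.Nonempty)) = τ.powerset.erase ∅ := by
        ext A
        simp [Finset.nonempty_iff_ne_empty, and_comm]
      rw [card_powerset, card_erase_of_mem hτ, hfil,
        card_erase_of_mem (empty_mem_powerset τ), card_powerset] at hcard
      have hlt : 2 ^ (K.card - 1) < 2 ^ τ.card :=
        lt_of_le_of_lt hcard (Nat.sub_lt (Nat.pow_pos (by norm_num)) one_pos)
      have hlt2 : K.card - 1 < τ.card := by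
        exact (Nat.pow_lt_pow_iff_right (by norm_num)).mp hlt
      have hpos : 1 ≤ K.card := Finset.card_pos.mpr ⟨τ, hτ⟩
      omega
    · -- antichain
      intro τ hτ σ hσ hne hss
      have hτK : τ ∈ K := hτ
      have hσK : σ ∈ K := hσ
      obtain ⟨hne', heq⟩ := hF {τ} (by simpa using hτK)
      have hAτ : F {τ} ⊆ τ := by
        have : τ ∈ suppSet D (F {τ}) ∩ K := by rw [heq]; exact mem_singleton_self τ
        rw [mem_inter, suppSet, mem_filter] at this
        exact this.1.2
      have hσmem : σ ∈ suppSet D (F {τ}) ∩ K := by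
        rw [mem_inter, suppSet, mem_filter]
        exact ⟨⟨hK hσK, hAτ.trans hss⟩, hσK⟩
      rw [heq, mem_singleton] at hσmem
      exact hne hσmem.symm
  have hbdd : BddAbove {q | dIndexGe D q} := by
    refine ⟨D.card, fun q hq => ?_⟩
    obtain ⟨A, hA, hqA, -, -⟩ := hq
    exact hqA.trans (Finset.card_le_card hA)
  have := le_csSup hbdd hgeK
  rwa [← hd]
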